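/- Naive 2SLS estimand ignoring spillovers: suppose, in addition to Assumptions 1, 2 and 4, that P[Z_i=1, Z_j=1] = 0 while P[Z_i=1, Z_j=0] > 0, P[Z_i=0, Z_j=1] > 0, P[Z_i=0, Z_j=0] > 0, and that P[C_i] = P[C_j] > 0 (identically distributed units within the pair). Then (E[Y | Z_i=1] − E[Y | Z_i=0]) / E[D_i | Z_i=1] = E[Y(1,0) − Y(0,0) | C_i] − E[Y(0,1) − Y(0,0) | C_j] · P[Z_j=1 | Z_i=0]. -/

import Mathlib

open MeasureTheory ProbabilityTheory
set_option linter.unusedSectionVars false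
set_option maxHeartbeats 1000000

section helpers
variable {Ω : Type*} [MeasurableSpace Ω] {P : Measure Ω} [IsProbabilityMeasure P]

lemma meas_ite {h : Ω → Bool} (hh : Measurable h) {f g : Ω → ℝ}
    (hfm : Measurable f) (hgm : Measurable g) :
    Measurable (fun ω => if h ω then f ω else g ω) :=
  Measurable.ite (hh (measurableSet_singleton true)) hfm hgm

lemma int_ite {h : Ω → Bool} (hh : Measurable h) {f g : Ω → ℝ}
    (hfm : Measurable f) (hgm : Measurable g)
    (hf : Integrable f P) (hg : Integrable g P) :
    Integrable (fun ω => if h ω then f ω else g ω) P := by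
  refine Integrable.mono' (hf.abs.add hg.abs) (meas_ite hh hfm hgm).aestronglyMeasurable ?_
  refine Filter.Eventually.of_forall fun ω => ?_
  have h1 := abs_nonneg (f ω); have h2 := abs_nonneg (g ω)
  rw [Real.norm_eq_abs]
  split <;> simp only [Pi.add_apply] <;> linarith

lemma integral_cond' (s : Set Ω) (f : Ω → ℝ) :
    ∫ ω, f ω ∂(P[|s]) = (P s)⁻¹.toReal * ∫ ω in s, f ω ∂P := by
  rw [ProbabilityTheory.cond, integral_smul_measure, smul_eq_mul]

lemma setIntegral_cond' {t : Set Ω} (ht : MeasurableSet t) (s : Set Ω) (f : Ω → ℝ) :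
    ∫ ω in t, f ω ∂(P[|s]) = (P s)⁻¹.toReal * ∫ ω in t ∩ s, f ω ∂P := by
  rw [ProbabilityTheory.cond, Measure.restrict_smul, integral_smul_measure, smul_eq_mul,
    Measure.restrict_restrict ht]

lemma indep_setIntegral {α β : Type*} [MeasurableSpace α] [MeasurableSpace β]
    {W : Ω → α} {V : Ω → β} (hIV : IndepFun W V P)
    {g : α → ℝ} (hg : Measurable g) (hV : Measurable V)
    (hint : Integrable (fun ω => g (W ω)) P) {T : Set β} (hT : MeasurableSet T) :
    ∫ ω in V ⁻¹' T, g (W ω) ∂P = (∫ ω, g (W ω) ∂P) * (P (V ⁻¹' T)).toReal := by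
  have hind : IndepFun (fun ω => g (W ω)) (fun ω => T.indicator (1 : β → ℝ) (V ω)) P :=
    hIV.comp hg (measurable_one.indicator hT)
  have hInd_eq : (fun ω => T.indicator (1 : β → ℝ) (V ω)) = (V ⁻¹' T).indicator (1 : Ω → ℝ) := by
    funext ω; by_cases hc : V ω ∈ T <;> simp [Set.indicator, hc]
  have hI : Integrable (fun ω => T.indicator (1 : β → ℝ) (V ω)) P := by
    rw [hInd_eq]; exact (integrable_const 1).indicator (hV hT)
  have hmul := hind.integral_fun_mul_eq_mul_integral hint.aestronglyMeasurable hI.aestronglyMeasurable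
  have h1 : ∫ ω, g (W ω) * T.indicator (1 : β → ℝ) (V ω) ∂P
      = ∫ ω in V ⁻¹' T, g (W ω) ∂P := by
    rw [← integral_indicator (hV hT)]
    congr 1; funext ω; by_cases hc : V ω ∈ T <;> simp [Set.indicator, hc]
  have h2 : ∫ ω, T.indicator (1 : β → ℝ) (V ω) ∂P = (P (V ⁻¹' T)).toReal := by
    rw [show (∫ ω, T.indicator (1 : β → ℝ) (V ω) ∂P)
        = ∫ ω, (V ⁻¹' T).indicator (1 : Ω → ℝ) ω ∂P by rw [hInd_eq]]
    exact integral_indicator_one (hV hT)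
  calc ∫ ω in V ⁻¹' T, g (W ω) ∂P = ∫ ω, g (W ω) * T.indicator (1 : β → ℝ) (V ω) ∂P := h1.symm
    _ = (∫ ω, g (W ω) ∂P) * ∫ ω, T.indicator (1 : β → ℝ) (V ω) ∂P := hmul
    _ = (∫ ω, g (W ω) ∂P) * (P (V ⁻¹' T)).toReal := by rw [h2]

lemma cond_integral_eq {α β : Type*} [MeasurableSpace α] [MeasurableSpace β]
    {W : Ω → α} {V : Ω → β} (hIV : IndepFun W V P)
    {g : α → ℝ} (hg : Measurable g) (hV : Measurable V)
    (hint : Integrable (fun ω => g (W ω)) P) {T : Set β} (hT : MeasurableSet T)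
    (hS : P (V ⁻¹' T) ≠ 0) :
    ∫ ω, g (W ω) ∂(P[|V ⁻¹' T]) = ∫ ω, g (W ω) ∂P := by
  rw [integral_cond', indep_setIntegral hIV hg hV hint hT, ENNReal.toReal_inv]
  have ha : (P (V ⁻¹' T)).toReal ≠ 0 := ENNReal.toReal_ne_zero.mpr ⟨hS, measure_ne_top _ _⟩
  field_simp

end helpers

noncomputable def bInd (b : Bool) : ℝ := if b then 1 else 0

theorem stmt_14
    {Ω : Type*} [MeasurableSpace Ω] (P : Measure Ω) [IsProbabilityMeasure P]
    (Y : Bool → Bool → Ω → ℝ) (Di Dj : Bool → Bool → Ω → Bool)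
    (Zi Zj : Ω → Bool)
    (hYmeas : ∀ d d', Measurable (Y d d'))
    (hYint : ∀ d d', Integrable (Y d d') P)
    (hDimeas : ∀ z z', Measurable (Di z z'))
    (hDjmeas : ∀ z z', Measurable (Dj z z'))
    (hZi : Measurable Zi) (hZj : Measurable Zj)
    (h11 : P ({x | Zi x = true} ∩ {x | Zj x = true}) = 0)
    (h10 : 0 < P ({x | Zi x = true} ∩ {x | Zj x = false}))
    (h01 : 0 < P ({x | Zi x = false} ∩ {x | Zj x = true}))
    (h00 : 0 < P ({x | Zi x = false} ∩ {x | Zj x = false}))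
    (hIV : IndepFun
      (fun ω => ((fun d d' => Y d d' ω),
                 (fun z z' => Di z z' ω),
                 (fun z z' => Dj z z' ω)))
      (fun ω => (Zi ω, Zj ω)) P)
    (hmono : ∀ᵐ ω ∂P,
      (Di false false ω ≤ Di false true ω ∧ Di false true ω ≤ Di true false ω ∧
        Di true false ω ≤ Di true true ω) ∧
      (Dj false false ω ≤ Dj false true ω ∧ Dj false true ω ≤ Dj true false ω ∧
        Dj true false ω ≤ Dj true true ω))
    (hosn : ∀ᵐ ω ∂P,
      Di false false ω = false ∧ Di false true ω = false ∧
      Dj false false ω = false ∧ Dj false true ω = false)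
    (hCC : P ({x | Di true false x = true ∧ Di false true x = false}) = P ({x | Dj true false x = true ∧ Dj false true x = false}))
    (hC : 0 < P ({x | Di true false x = true ∧ Di false true x = false}))
    :
    ((∫ ω, (Y (Di (Zi ω) (Zj ω) ω) (Dj (Zj ω) (Zi ω) ω) ω) ∂(P[|{x | Zi x = true}])) - (∫ ω, (Y (Di (Zi ω) (Zj ω) ω) (Dj (Zj ω) (Zi ω) ω) ω) ∂(P[|{x | Zi x = false}])))
      / (∫ ω, bInd (Di (Zi ω) (Zj ω) ω) ∂(P[|{x | Zi x = true}]))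
    = (∫ ω, (Y true false ω - Y false false ω) ∂(P[|{x | Di true false x = true ∧ Di false true x = false}]))
      - (∫ ω, (Y false true ω - Y false false ω) ∂(P[|{x | Dj true false x = true ∧ Dj false true x = false}]))
        * ((P[|{x | Zi x = false}]) {x | Zj x = true}).toReal := by
  classical
  -- notation
  set A1 : Set Ω := {x | Zi x = true} with hA1def
  set A0 : Set Ω := {x | Zi x = false} with hA0def
  set ZJ : Set Ω := {x | Zj x = true} with hZJdef
  have hA1m : MeasurableSet A1 := hZi (measurableSet_singleton true)
  have hA0m : MeasurableSet A0 := hZi (measurableSet_singleton false)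
  have hZJm : MeasurableSet ZJ := hZj (measurableSet_singleton true)
  have hA1ne : P A1 ≠ 0 := by
    intro h
    exact absurd (le_antisymm (h ▸ measure_mono (Set.inter_subset_left)) zero_le) (ne_of_gt h10)
  have hA0ne : P A0 ≠ 0 := by
    intro h
    exact absurd (le_antisymm (h ▸ measure_mono (Set.inter_subset_left)) zero_le) (ne_of_gt h00)
  haveI : IsProbabilityMeasure (P[|A0]) := cond_isProbabilityMeasure hA0ne
  -- the random bundle and instruments
  set W : Ω → ((Bool → Bool → ℝ) × (Bool → Bool → Bool) × (Bool → Bool → Bool)) :=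
    fun ω => ((fun d d' => Y d d' ω), (fun z z' => Di z z' ω), (fun z z' => Dj z z' ω)) with hWdef
  set V : Ω → Bool × Bool := fun ω => (Zi ω, Zj ω) with hVdef
  have hV : Measurable V := hZi.prodMk hZj
  -- measurable coordinate maps
  have hmY10 : Measurable fun w : ((Bool → Bool → ℝ) × (Bool → Bool → Bool) × (Bool → Bool → Bool)) => w.1 true false :=
    (measurable_pi_apply false).comp ((measurable_pi_apply true).comp measurable_fst)
  have hmY00 : Measurable fun w : ((Bool → Bool → ℝ) × (Bool → Bool → Bool) × (Bool → Bool → Bool)) => w.1 false false :=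
    (measurable_pi_apply false).comp ((measurable_pi_apply false).comp measurable_fst)
  have hmY01 : Measurable fun w : ((Bool → Bool → ℝ) × (Bool → Bool → Bool) × (Bool → Bool → Bool)) => w.1 false true :=
    (measurable_pi_apply true).comp ((measurable_pi_apply false).comp measurable_fst)
  have hmDi : Measurable fun w : ((Bool → Bool → ℝ) × (Bool → Bool → Bool) × (Bool → Bool → Bool)) => w.2.1 true false :=
    (measurable_pi_apply false).comp ((measurable_pi_apply true).comp (measurable_fst.comp measurable_snd))
  have hmDj : Measurable fun w : ((Bool → Bool → ℝ) × (Bool → Bool → Bool) × (Bool → Bool → Bool)) => w.2.2 true false :=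
    (measurable_pi_apply false).comp ((measurable_pi_apply true).comp (measurable_snd.comp measurable_snd))
  -- g functions
  set g1 : ((Bool → Bool → ℝ) × (Bool → Bool → Bool) × (Bool → Bool → Bool)) → ℝ :=
    fun w => if w.2.1 true false then w.1 true false else w.1 false false with hg1def
  set g2 : ((Bool → Bool → ℝ) × (Bool → Bool → Bool) × (Bool → Bool → Bool)) → ℝ :=
    fun w => if w.2.2 true false then w.1 false true else w.1 false false with hg2def
  set gD : ((Bool → Bool → ℝ) × (Bool → Bool → Bool) × (Bool → Bool → Bool)) → ℝ :=
    fun w => bInd (w.2.1 true false) with hgDdef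
  set g0 : ((Bool → Bool → ℝ) × (Bool → Bool → Bool) × (Bool → Bool → Bool)) → ℝ :=
    fun w => w.1 false false with hg0def
  have hg1 : Measurable g1 := Measurable.ite (hmDi (measurableSet_singleton true)) hmY10 hmY00
  have hg2 : Measurable g2 := Measurable.ite (hmDj (measurableSet_singleton true)) hmY01 hmY00
  have hgD : Measurable gD := by
    have : gD = fun w => if w.2.1 true false then (1:ℝ) else 0 := by
      funext w; simp [hgDdef, bInd]
    rw [this]
    exact Measurable.ite (hmDi (measurableSet_singleton true)) measurable_const measurable_const
  have hg0 : Measurable g0 := hmY00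
  -- pointwise functions
  set f1 : Ω → ℝ := fun ω => if Di true false ω then Y true false ω else Y false false ω with hf1def
  set f2 : Ω → ℝ := fun ω => if Dj true false ω then Y false true ω else Y false false ω with hf2def
  have hf1m : Measurable f1 := meas_ite (hDimeas true false) (hYmeas true false) (hYmeas false false)
  have hf2m : Measurable f2 := meas_ite (hDjmeas true false) (hYmeas false true) (hYmeas false false)
  have hf1 : Integrable f1 P :=
    int_ite (hDimeas true false) (hYmeas true false) (hYmeas false false) (hYint true false) (hYint false false)
  have hf2 : Integrable f2 P :=
    int_ite (hDjmeas true false) (hYmeas false true) (hYmeas false false) (hYint false true) (hYint false false)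
  have hfD : Integrable (fun ω => bInd (Di true false ω)) P := by
    have : (fun ω => bInd (Di true false ω)) = fun ω => if Di true false ω then (1:ℝ) else 0 := by
      funext ω; simp [bInd]
    rw [this]
    exact int_ite (hDimeas true false) measurable_const measurable_const (integrable_const 1) (integrable_const 0)
  -- target preimage sets
  set T1 : Set (Bool × Bool) := {p | p.1 = true} with hT1def
  have hT1 : MeasurableSet T1 := measurable_fst (measurableSet_singleton true)
  have hA1V : A1 = V ⁻¹' T1 := rfl
  set T01 : Set (Bool × Bool) := {p | p.1 = false ∧ p.2 = true} with hT01def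
  have hT01 : MeasurableSet T01 :=
    (measurable_fst (measurableSet_singleton false)).inter (measurable_snd (measurableSet_singleton true))
  set T00 : Set (Bool × Bool) := {p | p.1 = false ∧ p.2 = false} with hT00def
  have hT00 : MeasurableSet T00 :=
    (measurable_fst (measurableSet_singleton false)).inter (measurable_snd (measurableSet_singleton false))
  -- main integrals
  set I1 : ℝ := ∫ ω, f1 ω ∂P with hI1def
  set I2 : ℝ := ∫ ω, f2 ω ∂P with hI2def
  set I0 : ℝ := ∫ ω, Y false false ω ∂P with hI0def
  -- complier sets
  set Si : Set Ω := {x | Di true false x = true} with hSidef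
  set Sj : Set Ω := {x | Dj true false x = true} with hSjdef
  have hSim : MeasurableSet Si := hDimeas true false (measurableSet_singleton true)
  have hSjm : MeasurableSet Sj := hDjmeas true false (measurableSet_singleton true)
  set Ci : Set Ω := {x | Di true false x = true ∧ Di false true x = false} with hCidef
  set Cj : Set Ω := {x | Dj true false x = true ∧ Dj false true x = false} with hCjdef
  have hCiSi : Ci =ᵐ[P] Si := by
    rw [Filter.eventuallyEq_set]
    filter_upwards [hosn] with ω ho
    simp only [hCidef, hSidef, Set.mem_setOf_eq, ho.2.1, and_true]
  have hCjSj : Cj =ᵐ[P] Sj := by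
    rw [Filter.eventuallyEq_set]
    filter_upwards [hosn] with ω ho
    simp only [hCjdef, hSjdef, Set.mem_setOf_eq, ho.2.2.2, and_true]
  have hPCi : P Ci = P Si := measure_congr hCiSi
  have hPCj : P Cj = P Sj := measure_congr hCjSj
  set c : ℝ := (P Si).toReal with hcdef
  have hcne : c ≠ 0 :=
    ENNReal.toReal_ne_zero.mpr ⟨hPCi ▸ (ne_of_gt hC), measure_ne_top _ _⟩
  -- a.e. facts on conditional measures
  have hosn1 : ∀ᵐ ω ∂(P[|A1]), Di false false ω = false ∧ Di false true ω = false ∧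
      Dj false false ω = false ∧ Dj false true ω = false :=
    hosn.filter_mono (cond_absolutelyContinuous (s := A1)).ae_le
  have hosn0 : ∀ᵐ ω ∂(P[|A0]), Di false false ω = false ∧ Di false true ω = false ∧
      Dj false false ω = false ∧ Dj false true ω = false :=
    hosn.filter_mono (cond_absolutelyContinuous (s := A0)).ae_le
  have hZit : ∀ᵐ ω ∂(P[|A1]), Zi ω = true := by
    rw [ae_iff]
    have h : {ω | ¬ Zi ω = true} = A1ᶜ := by ext ω; simp [hA1def]
    rw [h, cond_apply hA1m, Set.inter_compl_self, measure_empty, mul_zero]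
  have hZjf : ∀ᵐ ω ∂(P[|A1]), Zj ω = false := by
    rw [ae_iff]
    have h : {ω | ¬ Zj ω = false} = ZJ := by ext ω; simp [hZJdef]
    rw [h, cond_apply hA1m, h11, mul_zero]
  have hZif : ∀ᵐ ω ∂(P[|A0]), Zi ω = false := by
    rw [ae_iff]
    have h : {ω | ¬ Zi ω = false} = A0ᶜ := by ext ω; simp [hA0def]
    rw [h, cond_apply hA0m, Set.inter_compl_self, measure_empty, mul_zero]
  -- Step 1 : E[Y | Zi = 1]
  have e1 : ∫ ω, (Y (Di (Zi ω) (Zj ω) ω) (Dj (Zj ω) (Zi ω) ω) ω) ∂(P[|A1]) = I1 := by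
    have heq : ∫ ω, (Y (Di (Zi ω) (Zj ω) ω) (Dj (Zj ω) (Zi ω) ω) ω) ∂(P[|A1])
        = ∫ ω, f1 ω ∂(P[|A1]) := by
      refine integral_congr_ae ?_
      filter_upwards [hZit, hZjf, hosn1] with ω h1 h2 ho
      rw [h1, h2, ho.2.2.2, hf1def]
      cases hD : Di true false ω <;> simp [hD]
    rw [heq, hA1V]
    exact cond_integral_eq hIV hg1 hV hf1 hT1 (hA1V ▸ hA1ne)
  -- Step 2 : denominator
  have eD : ∫ ω, bInd (Di (Zi ω) (Zj ω) ω) ∂(P[|A1]) = c := by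
    have heq : ∫ ω, bInd (Di (Zi ω) (Zj ω) ω) ∂(P[|A1])
        = ∫ ω, bInd (Di true false ω) ∂(P[|A1]) := by
      refine integral_congr_ae ?_
      filter_upwards [hZit, hZjf] with ω h1 h2
      rw [h1, h2]
    have hInd : ∫ ω, bInd (Di true false ω) ∂P = c := by
      have h : (fun ω => bInd (Di true false ω)) = Si.indicator (1 : Ω → ℝ) := by
        funext ω
        by_cases hD : Di true false ω = true
        · simp [Set.indicator, hSidef, hD, bInd]
        · simp only [Bool.not_eq_true] at hD
          simp [Set.indicator, hSidef, hD, bInd]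
      rw [h]
      exact integral_indicator_one hSim
    have hmid : ∫ ω, bInd (Di true false ω) ∂(P[|A1]) = ∫ ω, bInd (Di true false ω) ∂P := by
      rw [hA1V]
      exact cond_integral_eq hIV hgD hV hfD hT1 (hA1V ▸ hA1ne)
    rw [heq, hmid, hInd]
  -- Step 3 : E[Y | Zi = 0]
  set a : ℝ := ((P[|A0]) ZJ).toReal with hadef
  set b : ℝ := ((P[|A0]) ZJᶜ).toReal with hbdef
  have hab : a + b = 1 := by
    have h := measure_add_measure_compl (μ := P[|A0]) hZJm
    rw [measure_univ] at h
    rw [hadef, hbdef, ← ENNReal.toReal_add (measure_ne_top _ _) (measure_ne_top _ _), h,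
      ENNReal.toReal_one]
  set f0 : Ω → ℝ := fun ω => if Zj ω then f2 ω else Y false false ω with hf0def
  have hf0P : Integrable f0 P := int_ite hZj hf2m (hYmeas false false) hf2 (hYint false false)
  have hf0c : Integrable f0 (P[|A0]) := by
    rw [ProbabilityTheory.cond]
    exact (hf0P.restrict).smul_measure (ENNReal.inv_ne_top.mpr hA0ne)
  have e0 : ∫ ω, (Y (Di (Zi ω) (Zj ω) ω) (Dj (Zj ω) (Zi ω) ω) ω) ∂(P[|A0]) = I2 * a + I0 * b := by
    have heq : ∫ ω, (Y (Di (Zi ω) (Zj ω) ω) (Dj (Zj ω) (Zi ω) ω) ω) ∂(P[|A0])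
        = ∫ ω, f0 ω ∂(P[|A0]) := by
      refine integral_congr_ae ?_
      filter_upwards [hZif, hosn0] with ω h1 ho
      rw [h1, hf0def, hf2def]
      cases hz : Zj ω
      · simp only [hz]
        rw [ho.1, ho.2.2.1]
        simp
      · simp only [hz]
        rw [ho.2.1]
        cases hd : Dj true false ω <;> simp [hd]
    have hsplit : ∫ ω, f0 ω ∂(P[|A0]) = (∫ ω in ZJ, f0 ω ∂(P[|A0])) + ∫ ω in ZJᶜ, f0 ω ∂(P[|A0]) :=
      (integral_add_compl hZJm hf0c).symm
    have hpart1 : ∫ ω in ZJ, f0 ω ∂(P[|A0]) = I2 * a := by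
      have h1 : ∫ ω in ZJ, f0 ω ∂(P[|A0]) = ∫ ω in ZJ, f2 ω ∂(P[|A0]) := by
        refine setIntegral_congr_fun hZJm fun ω hω => ?_
        have : Zj ω = true := hω
        simp [hf0def, this]
      have hset : ZJ ∩ A0 = V ⁻¹' T01 := by
        ext ω
        simp only [Set.mem_inter_iff, Set.mem_preimage, hZJdef, hA0def, hT01def,
          Set.mem_setOf_eq, hVdef]
        exact and_comm
      have h2 : ∫ ω in ZJ ∩ A0, f2 ω ∂P = I2 * (P (ZJ ∩ A0)).toReal := by
        rw [hset]
        exact indep_setIntegral hIV hg2 hV hf2 hT01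
      have ha' : a = ((P A0)⁻¹ * P (A0 ∩ ZJ)).toReal := by
        rw [hadef, cond_apply hA0m]
      rw [h1, setIntegral_cond' hZJm, h2, ha', Set.inter_comm A0 ZJ, ENNReal.toReal_mul]
      ring
    have hpart2 : ∫ ω in ZJᶜ, f0 ω ∂(P[|A0]) = I0 * b := by
      have h1 : ∫ ω in ZJᶜ, f0 ω ∂(P[|A0]) = ∫ ω in ZJᶜ, Y false false ω ∂(P[|A0]) := by
        refine setIntegral_congr_fun hZJm.compl fun ω hω => ?_
        have hz : Zj ω = false := by
          have : ¬ (Zj ω = true) := hω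
          simpa using this
        simp [hf0def, hz]
      have hset : ZJᶜ ∩ A0 = V ⁻¹' T00 := by
        ext ω
        simp only [Set.mem_inter_iff, Set.mem_compl_iff, Set.mem_preimage, hZJdef, hA0def,
          hT00def, Set.mem_setOf_eq, hVdef, Bool.not_eq_true]
        exact and_comm
      have h2 : ∫ ω in ZJᶜ ∩ A0, Y false false ω ∂P = I0 * (P (ZJᶜ ∩ A0)).toReal := by
        rw [hset]
        exact indep_setIntegral hIV hg0 hV (hYint false false) hT00
      have hb' : b = ((P A0)⁻¹ * P (A0 ∩ ZJᶜ)).toReal := by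
        rw [hbdef, cond_apply hA0m]
      rw [h1, setIntegral_cond' hZJm.compl, h2, hb', Set.inter_comm A0 ZJᶜ, ENNReal.toReal_mul]
      ring
    rw [heq, hsplit, hpart1, hpart2]
  -- Step 4 : RHS conditional expectations
  have hI1split : I1 = (∫ ω in Si, Y true false ω ∂P) + ∫ ω in Siᶜ, Y false false ω ∂P := by
    rw [hI1def, ← integral_add_compl hSim hf1]
    congr 1
    · refine setIntegral_congr_fun hSim fun ω hω => ?_
      have : Di true false ω = true := hω
      simp [hf1def, this]
    · refine setIntegral_congr_fun hSim.compl fun ω hω => ?_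
      have hz : Di true false ω = false := by
        have : ¬ (Di true false ω = true) := hω
        simpa using this
      simp [hf1def, hz]
  have hI0spliti : I0 = (∫ ω in Si, Y false false ω ∂P) + ∫ ω in Siᶜ, Y false false ω ∂P :=
    (integral_add_compl hSim (hYint false false)).symm
  have hI2split : I2 = (∫ ω in Sj, Y false true ω ∂P) + ∫ ω in Sjᶜ, Y false false ω ∂P := by
    rw [hI2def, ← integral_add_compl hSjm hf2]
    congr 1
    · refine setIntegral_congr_fun hSjm fun ω hω => ?_
      have : Dj true false ω = true := hω
      simp [hf2def, this]
    · refine setIntegral_congr_fun hSjm.compl fun ω hω => ?_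
      have hz : Dj true false ω = false := by
        have : ¬ (Dj true false ω = true) := hω
        simpa using this
      simp [hf2def, hz]
  have hI0splitj : I0 = (∫ ω in Sj, Y false false ω ∂P) + ∫ ω in Sjᶜ, Y false false ω ∂P :=
    (integral_add_compl hSjm (hYint false false)).symm
  have eR1 : ∫ ω, (Y true false ω - Y false false ω) ∂(P[|Ci]) = (I1 - I0) / c := by
    rw [integral_cond', setIntegral_congr_set hCiSi,
      integral_sub ((hYint true false).restrict) ((hYint false false).restrict),
      hPCi, ENNReal.toReal_inv]
    have : (∫ ω in Si, Y true false ω ∂P) - ∫ ω in Si, Y false false ω ∂P = I1 - I0 := by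
      rw [hI1split, hI0spliti]; ring
    rw [this, hcdef]
    ring
  have eR2 : ∫ ω, (Y false true ω - Y false false ω) ∂(P[|Cj]) = (I2 - I0) / c := by
    rw [integral_cond', setIntegral_congr_set hCjSj,
      integral_sub ((hYint false true).restrict) ((hYint false false).restrict),
      ← hCC, hPCi, ENNReal.toReal_inv]
    have : (∫ ω in Sj, Y false true ω ∂P) - ∫ ω in Sj, Y false false ω ∂P = I2 - I0 := by
      rw [hI2split, hI0splitj]; ring
    rw [this, hcdef]
    ring
  -- assemble
  rw [e1, e0, eD, eR1, eR2]
  have hb1 : b = 1 - a := by linarith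
  rw [hb1]
  field_simp
  ring
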